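/- Let A be a semiprime unital ring with essential socle and R ⊆ A a right ideal. If there is M ≥ 0 such that len(pA) ≤ M for every idempotent p ∈ soc(A) ∩ R, then len(R) ≤ M (as a right A-module). In particular, R = pA for an idempotent p ∈ soc(A) of maximal length among idempotents in soc(A) ∩ R. -/

import Mathlib

open MulOpposite Submodule

/-- The length of a module: the supremum of lengths of chains of submodules. -/
noncomputable def mlen (R M : Type*) [Ring R] [AddCommGroup M] [Module R M] : ℕ∞ :=
  WithBot.unbotD 0 (Order.krullDim (Submodule R M))

/-- A ring is semiprime if it has no nonzero nilpotent (two-sided) ideals;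
equivalently, `a A a = 0` implies `a = 0`. -/
def IsSemiprimeRing (A : Type*) [Ring A] : Prop :=
  ∀ a : A, (∀ x : A, a * x * a = 0) → a = 0

/-- The (left) socle of a ring: the sum of all minimal left ideals. -/
noncomputable def socle (A : Type*) [Ring A] : Submodule A A :=
  sSup {m : Submodule A A | IsAtom m}

/-- An element is Fredholm if its image in `A/soc(A)` is invertible. -/
def IsFredholmElem {A : Type*} [Ring A] (a : A) : Prop :=
  ∃ b : A, a * b - 1 ∈ socle A ∧ b * a - 1 ∈ socle A

/-- A left ideal is Fredholm if it contains a Fredholm element. -/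
def IsFredholmLeftIdeal {A : Type*} [Ring A] (L : Submodule A A) : Prop :=
  ∃ a ∈ L, IsFredholmElem a

/-- The right annihilator of a set, as a right ideal (`Aᵐᵒᵖ`-submodule of `A`). -/
def rAnn {A : Type*} [Ring A] (S : Set A) : Submodule Aᵐᵒᵖ A where
  carrier := {a | ∀ s ∈ S, s * a = 0}
  add_mem' := by intro x y hx hy s hs; rw [Set.mem_setOf_eq] at *; rw [mul_add, hx s hs, hy s hs, add_zero]
  zero_mem' := by intro s _; exact mul_zero s
  smul_mem' := by
    intro c x hx s hs
    show s * (c • x) = 0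
    rw [MulOpposite.smul_eq_mul_unop, ← mul_assoc, hx s hs, zero_mul]

/-- The left annihilator of a set, as a left ideal. -/
def lAnn {A : Type*} [Ring A] (S : Set A) : Submodule A A where
  carrier := {a | ∀ s ∈ S, a * s = 0}
  add_mem' := by intro x y hx hy s hs; rw [Set.mem_setOf_eq] at *; rw [add_mul, hx s hs, hy s hs, add_zero]
  zero_mem' := by intro s _; exact zero_mul s
  smul_mem' := by
    intro c x hx s hs
    show c * x * s = 0
    rw [mul_assoc, hx s hs, mul_zero]

/-- A semiprime ring has essential socle if every nonzero two-sided ideal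
meets the socle nontrivially. -/
def HasEssentialSocle (A : Type*) [Ring A] : Prop :=
  ∀ I : TwoSidedIdeal A, I ≠ ⊥ → ∃ x, x ∈ I ∧ x ∈ socle A ∧ x ≠ 0

/-! ### Auxiliary length lemmas -/

section MlenLemmas

variable {R M : Type*} [Ring R] [AddCommGroup M] [Module R M]

lemma mlen_eq_iSup (R M : Type*) [Ring R] [AddCommGroup M] [Module R M] :
    mlen R M = ⨆ p : LTSeries (Submodule R M), (p.length : ℕ∞) := by
  rw [mlen, Order.krullDim_eq_iSup_length, WithBot.unbotD_coe]

lemma mlen_succ_le {N N' : Submodule R M} (h : N < N') (p : LTSeries (Submodule R N)) :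
    (p.length : ℕ∞) + 1 ≤ mlen R N' := by
  have hinj := Submodule.inclusion_injective (R := R) h.le
  have hf := Submodule.map_strictMono_of_injective (f := Submodule.inclusion h.le) hinj
  have hlt : (p.map _ hf).last < ⊤ := by
    refine lt_of_le_of_ne le_top fun heq => ?_
    obtain ⟨y, hyN', hyN⟩ := SetLike.exists_of_lt h
    have hm : (⟨y, hyN'⟩ : N') ∈ (p.map _ hf).last := heq ▸ Submodule.mem_top
    rw [LTSeries.last_map] at hm
    obtain ⟨z, _, hz2⟩ := hm
    have : (z : M) = y := congrArg Subtype.val hz2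
    exact hyN (this ▸ z.2)
  have hle := le_iSup (fun q : LTSeries (Submodule R N') => (q.length : ℕ∞))
    ((p.map _ hf).snoc ⊤ hlt)
  rw [mlen_eq_iSup]
  refine le_trans (le_of_eq ?_) hle
  have : ((p.map _ hf).snoc ⊤ hlt).length = p.length + 1 := by
    simp [RelSeries.snoc]
    rfl
  rw [this]
  push_cast
  rfl

lemma mlen_lt_of_lt {N N' : Submodule R M} (h : N < N') (hfin : mlen R N' ≠ ⊤) :
    mlen R N < mlen R N' := by
  obtain ⟨k, hk⟩ : ∃ k : ℕ, (k : ℕ∞) = mlen R N' := by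
    lift mlen R N' to ℕ using hfin with k hk
    exact ⟨k, rfl⟩
  rcases k with _ | m
  · exfalso
    have := mlen_succ_le h (RelSeries.singleton _ ⊥)
    rw [← hk] at this
    simp at this
  · rw [← hk, mlen_eq_iSup]
    refine lt_of_le_of_lt (iSup_le (fun p => ?_) : _ ≤ (m : ℕ∞)) ?_
    swap
    · exact Nat.cast_lt.mpr (Nat.lt_succ_self m)
    have h1 := mlen_succ_le h p
    rw [← hk] at h1
    have h2 : p.length + 1 ≤ m + 1 := by exact_mod_cast h1
    exact_mod_cast Nat.le_of_succ_le_succ h2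

end MlenLemmas

/-! ### Auxiliary socle lemmas -/

section SocleLemmas

variable {A : Type*} [Ring A]

lemma rmul_mem' {N : Submodule Aᵐᵒᵖ A} {w : A} (hw : w ∈ N) (a : A) : w * a ∈ N := by
  have := N.smul_mem (op a) hw
  rwa [MulOpposite.smul_eq_mul_unop, MulOpposite.unop_op] at this

lemma mem_span_op {y x : A} :
    x ∈ Submodule.span Aᵐᵒᵖ ({y} : Set A) ↔ ∃ d : A, y * d = x := by
  rw [Submodule.mem_span_singleton]
  constructor
  · rintro ⟨a, rfl⟩
    exact ⟨a.unop, (MulOpposite.smul_eq_mul_unop (a := a) (b := y)).symm⟩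
  · rintro ⟨d, rfl⟩
    exact ⟨op d, by rw [MulOpposite.smul_eq_mul_unop, MulOpposite.unop_op]⟩

lemma isAtom_map_or {R M N : Type*} [Ring R] [AddCommGroup M] [Module R M]
    [AddCommGroup N] [Module R N] {L : Submodule R M} (hL : IsAtom L) (f : M →ₗ[R] N) :
    Submodule.map f L = ⊥ ∨ IsAtom (Submodule.map f L) := by
  rcases eq_or_ne (Submodule.map f L) ⊥ with h | h
  · exact Or.inl h
  refine Or.inr ⟨h, fun K hK => ?_⟩
  have hcom : Submodule.comap f K ⊓ L < L := by
    refine lt_of_le_of_ne inf_le_right fun he => ?_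
    have h1 : L ≤ Submodule.comap f K := by
      conv_lhs => rw [← he]
      exact inf_le_left
    exact absurd (lt_of_lt_of_le hK (Submodule.map_le_iff_le_comap.2 h1)) (lt_irrefl K)
  have hbot : Submodule.comap f K ⊓ L = ⊥ := hL.2 _ hcom
  rw [eq_bot_iff]
  intro x hx
  obtain ⟨y, hyL, rfl⟩ := hK.le hx
  have hy : y ∈ Submodule.comap f K ⊓ L := ⟨hx, hyL⟩
  rw [hbot] at hy
  simp only [Submodule.mem_bot] at hy
  subst hy
  simp

lemma socle_mul_mem {a : A} (ha : a ∈ socle A) (b : A) : a * b ∈ socle A := by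
  set φ := LinearMap.toSpanSingleton A A b with hφ
  have hmem : φ a ∈ Submodule.map φ (socle A) := Submodule.mem_map_of_mem ha
  have hle : Submodule.map φ (socle A) ≤ socle A := by
    conv_lhs => rw [socle, sSup_eq_iSup]
    rw [Submodule.map_iSup]
    refine iSup_le fun L => ?_
    rw [Submodule.map_iSup]
    refine iSup_le fun hL => ?_
    rcases isAtom_map_or hL φ with h | h
    · rw [h]; exact bot_le
    · show Submodule.map φ L ≤ sSup {m : Submodule A A | IsAtom m}
      exact le_sSup h
  have : φ a = a * b := by simp [hφ, LinearMap.toSpanSingleton_apply, smul_eq_mul]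
  rw [← this]
  exact hle hmem

lemma exists_socle_right (hA : IsSemiprimeRing A) (hE : HasEssentialSocle A)
    {z : A} (hz : z ≠ 0) : ∃ c, z * c ≠ 0 ∧ z * c ∈ socle A := by
  set C : Set A := {w | ∃ b, w = z * b} with hC
  set W := Submodule.span A C with hW
  have hrmul : ∀ {x : A}, x ∈ W → ∀ y : A, x * y ∈ W := by
    intro x hx
    induction hx using Submodule.span_induction with
    | mem w hw => rintro y; obtain ⟨b, rfl⟩ := hw
                  exact Submodule.subset_span ⟨b * y, by rw [mul_assoc]⟩
    | zero => intro y; rw [zero_mul]; exact W.zero_mem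
    | add x₁ x₂ _ _ ih1 ih2 => intro y; rw [add_mul]; exact W.add_mem (ih1 y) (ih2 y)
    | smul a x₁ _ ih => intro y
                        rw [smul_eq_mul, mul_assoc]
                        exact W.smul_mem a (ih y)
  let I : TwoSidedIdeal A := TwoSidedIdeal.mk' W W.zero_mem
    (fun h1 h2 => W.add_mem h1 h2) (fun h => W.neg_mem h)
    (fun h => W.smul_mem _ h) (fun h => hrmul h _)
  have hzW : z ∈ W := Submodule.subset_span ⟨1, (mul_one z).symm⟩
  have hI : I ≠ ⊥ := by
    intro hb
    have hzI : z ∈ I := by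
      rw [show I = TwoSidedIdeal.mk' W W.zero_mem _ _ _ _ from rfl, TwoSidedIdeal.mem_mk']
      exact hzW
    rw [hb, TwoSidedIdeal.mem_bot] at hzI
    exact hz hzI
  obtain ⟨s, hsI, hssoc, hs0⟩ := hE I hI
  have hsW : s ∈ W := by rwa [show I = TwoSidedIdeal.mk' W W.zero_mem _ _ _ _ from rfl,
    TwoSidedIdeal.mem_mk'] at hsI
  obtain ⟨x₀, hx₀⟩ : ∃ x, s * x * s ≠ 0 := by
    by_contra h; push_neg at h; exact hs0 (hA s h)
  have key : ∀ w ∈ W, ∀ t : A, w * t ≠ 0 → ∃ c, z * (c * t) ≠ 0 := by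
    intro w hw
    induction hw using Submodule.span_induction with
    | mem w hw => intro t ht
                  obtain ⟨b, rfl⟩ := hw
                  exact ⟨b, by rwa [← mul_assoc]⟩
    | zero => intro t ht; rw [zero_mul] at ht; exact absurd rfl ht
    | add x₁ x₂ _ _ ih1 ih2 =>
        intro t ht
        rcases (by by_contra hcon
                   push_neg at hcon
                   rw [add_mul, hcon.1, hcon.2, add_zero] at ht
                   exact ht rfl : x₁ * t ≠ 0 ∨ x₂ * t ≠ 0) with h | h
        · exact ih1 t h
        · exact ih2 t h
    | smul a x₁ _ ih =>
        intro t ht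
        refine ih t fun h0 => ?_
        rw [smul_eq_mul, mul_assoc, h0, mul_zero] at ht
        exact ht rfl
  obtain ⟨c, hc⟩ := key s hsW (x₀ * s) (by rwa [← mul_assoc])
  refine ⟨c * (x₀ * s), hc, ?_⟩
  have : z * (c * (x₀ * s)) = (z * c * x₀) • s := by
    rw [smul_eq_mul]; noncomm_ring
  rw [this]
  exact (socle A).smul_mem _ hssoc

lemma exists_atom_le_span {u : A} (hu : u ∈ socle A) (h0 : u ≠ 0) :
    ∃ L : Submodule A A, IsAtom L ∧ L ≤ Submodule.span A {u} := by
  have hc := Submodule.singleton_span_isCompactElement u (R := A)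
  have hle : Submodule.span A {u} ≤ sSup {m : Submodule A A | IsAtom m} := by
    rw [Submodule.span_singleton_le_iff_mem]; exact hu
  obtain ⟨t, hts, hlet⟩ := (CompleteLattice.isCompactElement_iff_exists_le_sSup_of_le_sSup _ _).1 hc _ hle
  set T : Submodule A A := t.sup id with hT
  have hsub : Submodule.span A {u} ≤ T := hlet
  have hTss : IsSemisimpleModule A T := by
    have : T = ⨆ L ∈ (t : Set (Submodule A A)), L := by
      rw [hT, Finset.sup_id_eq_sSup, sSup_eq_iSup]
    rw [this]
    refine isSemisimpleModule_biSup_of_isSemisimpleModule_submodule fun L hL => ?_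
    have : IsSimpleModule A L := (isSimpleModule_iff_isAtom (m := L)).2 (hts hL)
    infer_instance
  have huT : u ∈ T := hsub (Submodule.mem_span_singleton_self u)
  have hN : Submodule.comap T.subtype (Submodule.span A {u}) ≠ ⊥ := by
    intro h
    have hm : (⟨u, huT⟩ : T) ∈ Submodule.comap T.subtype (Submodule.span A {u}) := by
      exact Submodule.mem_comap.2 (Submodule.mem_span_singleton_self u)
    rw [h, Submodule.mem_bot] at hm
    exact h0 (congrArg Subtype.val hm)
  obtain ⟨m, hm, hms⟩ :=
    (IsSemisimpleModule.eq_bot_or_exists_simple_le (Submodule.comap T.subtype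
      (Submodule.span A {u}))).resolve_left hN
  refine ⟨m.map T.subtype, ?_, ?_⟩
  · rw [← isSimpleModule_iff_isAtom]
    exact IsSimpleModule.congr
      (Submodule.equivMapOfInjective T.subtype (Submodule.injective_subtype T) m).symm
  · exact le_trans (Submodule.map_mono hm) (Submodule.map_comap_le _ _)

lemma brauer (hA : IsSemiprimeRing A) {L : Submodule A A} (hL : IsAtom L) :
    ∃ e, e ∈ L ∧ e ≠ 0 ∧ IsIdempotentElem e := by
  obtain ⟨a₀, ha₀L, ha₀⟩ : ∃ a, a ∈ L ∧ a ≠ 0 := by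
    by_contra h
    push_neg at h
    refine hL.1 (eq_bot_iff.2 fun x hx => ?_)
    rw [Submodule.mem_bot]
    exact h x hx
  obtain ⟨x₁, hx₁⟩ : ∃ x, a₀ * x * a₀ ≠ 0 := by
    by_contra h; push_neg at h; exact ha₀ (hA _ h)
  set a := x₁ * a₀ with ha
  have haL : a ∈ L := L.smul_mem x₁ ha₀L
  have ha₀a : a₀ * a ≠ 0 := by rwa [ha, ← mul_assoc]
  have haz : a ≠ 0 := fun h => ha₀a (by rw [h, mul_zero])
  set φ := LinearMap.toSpanSingleton A A a with hφ
  have hφ_apply : ∀ y : A, φ y = y * a := fun y => by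
    simp [hφ, LinearMap.toSpanSingleton_apply, smul_eq_mul]
  set K : Submodule A A := L ⊓ LinearMap.ker φ with hKdef
  have hK : K = ⊥ := by
    refine hL.2 _ (lt_of_le_of_ne inf_le_left fun he => ?_)
    have : a₀ ∈ K := he ▸ ha₀L
    have h2 : φ a₀ = 0 := this.2
    rw [hφ_apply] at h2
    exact ha₀a h2
  have hmaple : Submodule.map φ L ≤ L := by
    rintro _ ⟨y, hy, rfl⟩
    rw [hφ_apply]
    exact L.smul_mem y haL
  have hmapne : Submodule.map φ L ≠ ⊥ := by
    intro h
    have : φ a₀ ∈ Submodule.map φ L := Submodule.mem_map_of_mem ha₀L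
    rw [h, Submodule.mem_bot, hφ_apply] at this
    exact ha₀a this
  have hmap : Submodule.map φ L = L := by
    rcases lt_or_eq_of_le hmaple with h | h
    · exact absurd (hL.2 _ h) hmapne
    · exact h
  obtain ⟨e, heL, hea⟩ : ∃ e ∈ L, φ e = a := by
    have : a ∈ Submodule.map φ L := hmap.symm ▸ haL
    obtain ⟨e, heL, he⟩ := this
    exact ⟨e, heL, he⟩
  rw [hφ_apply] at hea
  refine ⟨e, heL, ?_, ?_⟩
  · rintro rfl
    rw [zero_mul] at hea
    exact haz hea.symm
  · have hker : e * e - e ∈ K := by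
      refine ⟨L.sub_mem (L.smul_mem e heL) heL, ?_⟩
      show φ (e * e - e) = 0
      rw [hφ_apply, sub_mul, mul_assoc, hea, hea, sub_self]
    rw [hK, Submodule.mem_bot, sub_eq_zero] at hker
    exact hker

lemma exists_idem_zA (hA : IsSemiprimeRing A) (hE : HasEssentialSocle A)
    {z : A} (hz : z ≠ 0) :
    ∃ q d : A, q = z * d ∧ q ≠ 0 ∧ IsIdempotentElem q ∧ q ∈ socle A := by
  obtain ⟨c, hzc, hzcsoc⟩ := exists_socle_right hA hE hz
  set u := z * c with hu
  obtain ⟨L, hL, hLle⟩ := exists_atom_le_span hzcsoc hzc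
  obtain ⟨e, heL, he0, heid⟩ := brauer hA hL
  obtain ⟨c', hc'⟩ := Submodule.mem_span_singleton.1 (hLle heL)
  have he : c' * u = e := by rw [← smul_eq_mul]; exact hc'
  refine ⟨u * (e * c'), c * (e * c'), by rw [hu]; noncomm_ring, ?_, ?_, ?_⟩
  · intro h
    apply he0
    have heq : e = c' * (u * (e * c')) * u := by
      calc e = e * e * e := by rw [heid.eq, heid.eq]
      _ = (c' * u) * e * (c' * u) := by rw [he]
      _ = c' * (u * (e * c')) * u := by noncomm_ring
    rw [heq, h, mul_zero, zero_mul]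
  · show (u * (e * c')) * (u * (e * c')) = u * (e * c')
    calc (u * (e * c')) * (u * (e * c')) = u * ((e * (c' * u) * e) * c') := by noncomm_ring
    _ = u * (e * c') := by rw [he, heid.eq, heid.eq]
  · exact socle_mul_mem hzcsoc (e * c')

end SocleLemmas

theorem stmt14 (A : Type*) [Ring A] (hA : IsSemiprimeRing A) (hE : HasEssentialSocle A)
    (R : Submodule Aᵐᵒᵖ A) (M : ℕ)
    (hM : ∀ p : A, IsIdempotentElem p → p ∈ socle A → p ∈ R →
      mlen Aᵐᵒᵖ (Submodule.span Aᵐᵒᵖ ({p} : Set A)) ≤ (M : ℕ∞)) :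
    mlen Aᵐᵒᵖ R ≤ (M : ℕ∞) ∧
      ∃ p : A, IsIdempotentElem p ∧ p ∈ socle A ∧ p ∈ R ∧
        R = Submodule.span Aᵐᵒᵖ ({p} : Set A) ∧
        ∀ q : A, IsIdempotentElem q → q ∈ socle A → q ∈ R →
          mlen Aᵐᵒᵖ (Submodule.span Aᵐᵒᵖ ({q} : Set A))
            ≤ mlen Aᵐᵒᵖ (Submodule.span Aᵐᵒᵖ ({p} : Set A)) := by
  classical
  set P : A → Prop := fun q => IsIdempotentElem q ∧ q ∈ socle A ∧ q ∈ R with hPdef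
  have hval : ∀ q, P q → ∃ n : ℕ,
      (n : ℕ∞) = mlen Aᵐᵒᵖ (Submodule.span Aᵐᵒᵖ ({q} : Set A)) := by
    intro q hq
    have h1 := hM q hq.1 hq.2.1 hq.2.2
    have h2 : mlen Aᵐᵒᵖ (Submodule.span Aᵐᵒᵖ ({q} : Set A)) ≠ ⊤ := by
      intro h
      rw [h, top_le_iff] at h1
      exact absurd h1.symm (by simp)
    lift mlen Aᵐᵒᵖ (Submodule.span Aᵐᵒᵖ ({q} : Set A)) to ℕ using h2 with n hn
    exact ⟨n, rfl⟩
  set S : Set ℕ := {n | ∃ q, P q ∧ (n : ℕ∞) = mlen Aᵐᵒᵖ (Submodule.span Aᵐᵒᵖ ({q} : Set A))}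
    with hSdef
  have hS0 : S.Nonempty := by
    have hP0 : P 0 := ⟨IsIdempotentElem.zero, (socle A).zero_mem, R.zero_mem⟩
    obtain ⟨n, hn⟩ := hval 0 hP0
    exact ⟨n, 0, hP0, hn⟩
  have hSbdd : BddAbove S := by
    refine ⟨M, fun n hn => ?_⟩
    obtain ⟨q, hq, hqn⟩ := hn
    have := hM q hq.1 hq.2.1 hq.2.2
    rw [← hqn] at this
    exact_mod_cast this
  obtain ⟨p, hPp, hplen⟩ := Nat.sSup_mem hS0 hSbdd
  have hmax : ∀ q, P q → mlen Aᵐᵒᵖ (Submodule.span Aᵐᵒᵖ ({q} : Set A))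
      ≤ mlen Aᵐᵒᵖ (Submodule.span Aᵐᵒᵖ ({p} : Set A)) := by
    intro q hq
    obtain ⟨n, hn⟩ := hval q hq
    have hnS : n ∈ S := ⟨q, hq, hn⟩
    have hle : n ≤ sSup S := le_csSup hSbdd hnS
    rw [← hn, ← hplen]
    exact_mod_cast hle
  have hReq : R = Submodule.span Aᵐᵒᵖ ({p} : Set A) := by
    refine le_antisymm ?_ (by rw [Submodule.span_singleton_le_iff_mem]; exact hPp.2.2)
    by_contra hcon
    obtain ⟨x, hxR, hxp⟩ := SetLike.not_le_iff_exists.1 hcon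
    set z := x - p * x with hz
    have hzR : z ∈ R := R.sub_mem hxR (rmul_mem' hPp.2.2 x)
    have hz0 : z ≠ 0 := by
      intro h
      apply hxp
      have hx : x = p * x := by rwa [hz, sub_eq_zero] at h
      rw [hx]
      exact mem_span_op.2 ⟨x, rfl⟩
    have hpz : p * z = 0 := by
      rw [hz, mul_sub, ← mul_assoc, hPp.1.eq, sub_self]
    obtain ⟨q, d, hqd, hq0, hqid, hqsoc⟩ := exists_idem_zA hA hE hz0
    have hqR : q ∈ R := hqd ▸ rmul_mem' hzR d
    have hpq : p * q = 0 := by rw [hqd, ← mul_assoc, hpz, zero_mul]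
    set e' := p + q - q * p with he'
    have hXp : e' * p = p := by
      rw [he', sub_mul, add_mul, hPp.1.eq, mul_assoc, hPp.1.eq]
      abel
    have hYq : e' * q = q := by
      rw [he', sub_mul, add_mul, hpq, hqid.eq, mul_assoc q p q, hpq, mul_zero]
      abel
    have hidem' : IsIdempotentElem e' := by
      show e' * e' = e'
      have h3 : e' * (q * p) = q * p := by rw [← mul_assoc, hYq]
      calc e' * e' = e' * p + e' * q - e' * (q * p) := by
            conv_lhs => rw [he']
            conv_rhs => rw [he']
            noncomm_ring
      _ = p + q - q * p := by rw [hXp, hYq, h3]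
      _ = e' := he'.symm
    have he'R : e' ∈ R := by
      rw [he']
      exact R.sub_mem (R.add_mem hPp.2.2 hqR) (rmul_mem' hqR p)
    have he'soc : e' ∈ socle A := by
      rw [he']
      exact (socle A).sub_mem ((socle A).add_mem hPp.2.1 hqsoc) (socle_mul_mem hqsoc p)
    have hpe' : p * e' = p := by
      rw [he', mul_sub, mul_add, hPp.1.eq, hpq, ← mul_assoc, hpq, zero_mul]
      abel
    have he'notin : e' ∉ Submodule.span Aᵐᵒᵖ ({p} : Set A) := by
      intro hmem
      obtain ⟨w, hw⟩ := mem_span_op.1 hmem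
      have h1 : p * e' = e' := by rw [← hw, ← mul_assoc, hPp.1.eq]
      have h2 : e' = p := by rw [← h1, hpe']
      have : q = 0 := by rw [← hYq, h2, hpq]
      exact hq0 this
    have hlt : Submodule.span Aᵐᵒᵖ ({p} : Set A) < Submodule.span Aᵐᵒᵖ ({e'} : Set A) := by
      refine lt_of_le_of_ne ?_ fun heq => he'notin ?_
      · rw [Submodule.span_singleton_le_iff_mem]
        exact mem_span_op.2 ⟨p, hXp⟩
      · rw [heq]
        exact Submodule.mem_span_singleton_self e'
    have hfin : mlen Aᵐᵒᵖ (Submodule.span Aᵐᵒᵖ ({e'} : Set A)) ≠ ⊤ := by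
      intro h
      have h1 := hM e' hidem' he'soc he'R
      rw [h, top_le_iff] at h1
      exact absurd h1.symm (by simp)
    have hstrict := mlen_lt_of_lt hlt hfin
    exact absurd (hmax e' ⟨hidem', he'soc, he'R⟩) (not_le.2 hstrict)
  refine ⟨?_, p, hPp.1, hPp.2.1, hPp.2.2, hReq,
    fun q hq1 hq2 hq3 => hmax q ⟨hq1, hq2, hq3⟩⟩
  rw [hReq]
  exact hM p hPp.1 hPp.2.1 hPp.2.2
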